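/- Let K be a field of characteristic 0 and let J : K[x] → K[x] be the K-linear integration operator with J(xⁿ) = xⁿ⁺¹/(n+1). Then the product a ⋆ b = a·J²(b) on K[x] satisfies the identity (a, b, [c, d]) + (a, c, [d, b]) + (a, d, [b, c]) = 0 for all a, b, c, d ∈ K[x], where (x, y, z) = x ⋆ (y ⋆ z) − (x ⋆ y) ⋆ z and [x, y] = x ⋆ y − y ⋆ x. -/

import Mathlib

open Polynomial

/-- The product `a ⋆ b = a * J² b`. -/
noncomputable def star2 {K : Type*} [Field K]
    (J : Polynomial K →ₗ[K] Polynomial K) (a b : Polynomial K) : Polynomial K :=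
  a * J (J b)

/-- The commutator `[a, b] = a ⋆ b − b ⋆ a` of the product `⋆`. -/
noncomputable def sbrk {K : Type*} [Field K]
    (J : Polynomial K →ₗ[K] Polynomial K) (a b : Polynomial K) : Polynomial K :=
  star2 J a b - star2 J b a

/-- The associator `(x, y, z) = x ⋆ (y ⋆ z) − (x ⋆ y) ⋆ z` of the product `⋆`. -/
noncomputable def sassoc {K : Type*} [Field K]
    (J : Polynomial K →ₗ[K] Polynomial K) (a b c : Polynomial K) : Polynomial K :=
  star2 J a (star2 J b c) - star2 J (star2 J a b) c

set_option maxHeartbeats 1000000 in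
theorem scalar_id {K : Type*} [Field K] (x y z : K)
 (h1 : x+1 ≠ 0)(h2 : x+2 ≠ 0)(h3 : y+1 ≠ 0)(h4 : y+2 ≠ 0)(h5 : z+1 ≠ 0)(h6 : z+2 ≠ 0)
 (h7 : y+z+3 ≠ 0)(h8 : y+z+4 ≠ 0)(h9 : z+x+3 ≠ 0)(h10 : z+x+4 ≠ 0)
 (h11 : x+y+3 ≠ 0)(h12 : x+y+4 ≠ 0)(h13 : x+y+z+5 ≠ 0)(h14 : x+y+z+6 ≠ 0) :
 (((z+1)⁻¹*(z+2)⁻¹ - (y+1)⁻¹*(y+2)⁻¹) * ((y+z+3)⁻¹*(y+z+4)⁻¹ * ((x+y+z+5)⁻¹*(x+y+z+6)⁻¹ - (x+1)⁻¹*(x+2)⁻¹)))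
 + (((x+1)⁻¹*(x+2)⁻¹ - (z+1)⁻¹*(z+2)⁻¹) * ((z+x+3)⁻¹*(z+x+4)⁻¹ * ((x+y+z+5)⁻¹*(x+y+z+6)⁻¹ - (y+1)⁻¹*(y+2)⁻¹)))
 + (((y+1)⁻¹*(y+2)⁻¹ - (x+1)⁻¹*(x+2)⁻¹) * ((x+y+3)⁻¹*(x+y+4)⁻¹ * ((x+y+z+5)⁻¹*(x+y+z+6)⁻¹ - (z+1)⁻¹*(z+2)⁻¹)))
 = 0 := by
  have hA1 : (x+1)*(x+1)⁻¹ = 1 := mul_inv_cancel₀ h1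
  have hA2 : (x+2)*(x+2)⁻¹ = 1 := mul_inv_cancel₀ h2
  have hB1 : (y+1)*(y+1)⁻¹ = 1 := mul_inv_cancel₀ h3
  have hB2 : (y+2)*(y+2)⁻¹ = 1 := mul_inv_cancel₀ h4
  have hC1 : (z+1)*(z+1)⁻¹ = 1 := mul_inv_cancel₀ h5
  have hC2 : (z+2)*(z+2)⁻¹ = 1 := mul_inv_cancel₀ h6
  have hD1 : (y+z+3)*(y+z+3)⁻¹ = 1 := mul_inv_cancel₀ h7
  have hD2 : (y+z+4)*(y+z+4)⁻¹ = 1 := mul_inv_cancel₀ h8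
  have hE1 : (z+x+3)*(z+x+3)⁻¹ = 1 := mul_inv_cancel₀ h9
  have hE2 : (z+x+4)*(z+x+4)⁻¹ = 1 := mul_inv_cancel₀ h10
  have hF1 : (x+y+3)*(x+y+3)⁻¹ = 1 := mul_inv_cancel₀ h11
  have hF2 : (x+y+4)*(x+y+4)⁻¹ = 1 := mul_inv_cancel₀ h12
  have hG1 : (x+y+z+5)*(x+y+z+5)⁻¹ = 1 := mul_inv_cancel₀ h13
  have hG2 : (x+y+z+6)*(x+y+z+6)⁻¹ = 1 := mul_inv_cancel₀ h14
  linear_combination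
      ((-2)*(y+2)⁻¹*(z+1)⁻¹*(z+2)⁻¹*(y+z+3)⁻¹*(y+z+4)⁻¹*(x+y+z+5)⁻¹*(x+y+z+6)⁻¹ + 2*(x+1)⁻¹*(x+2)⁻¹*(y+2)⁻¹*(x+y+3)⁻¹*(x+y+4)⁻¹*(x+y+z+5)⁻¹*(x+y+z+6)⁻¹ + (-2)*(x+1)⁻¹*(x+2)⁻¹*(y+2)⁻¹*(z+1)⁻¹*(z+2)⁻¹*(x+y+3)⁻¹*(x+y+4)⁻¹ + 2*(x+1)⁻¹*(x+2)⁻¹*(y+2)⁻¹*(z+1)⁻¹*(z+2)⁻¹*(y+z+3)⁻¹*(y+z+4)⁻¹ + (-6)*z*(x+1)⁻¹*(x+2)⁻¹*(y+2)⁻¹*(z+1)⁻¹*(z+2)⁻¹*(z+x+3)⁻¹*(z+x+4)⁻¹*(x+y+z+5)⁻¹*(x+y+z+6)⁻¹ + (-2)*z*z*(x+1)⁻¹*(x+2)⁻¹*(y+2)⁻¹*(z+1)⁻¹*(z+2)⁻¹*(z+x+3)⁻¹*(z+x+4)⁻¹*(x+y+z+5)⁻¹*(x+y+z+6)⁻¹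 + (-1)*y*(y+2)⁻¹*(z+1)⁻¹*(z+2)⁻¹*(y+z+3)⁻¹*(y+z+4)⁻¹*(x+y+z+5)⁻¹*(x+y+z+6)⁻¹ + y*(x+1)⁻¹*(x+2)⁻¹*(y+2)⁻¹*(x+y+3)⁻¹*(x+y+4)⁻¹*(x+y+z+5)⁻¹*(x+y+z+6)⁻¹ + (-1)*y*(x+1)⁻¹*(x+2)⁻¹*(y+2)⁻¹*(z+1)⁻¹*(z+2)⁻¹*(x+y+3)⁻¹*(x+y+4)⁻¹ + y*(x+1)⁻¹*(x+2)⁻¹*(y+2)⁻¹*(z+1)⁻¹*(z+2)⁻¹*(y+z+3)⁻¹*(y+z+4)⁻¹ + (-3)*y*z*(x+1)⁻¹*(x+2)⁻¹*(y+2)⁻¹*(z+1)⁻¹*(z+2)⁻¹*(z+x+3)⁻¹*(z+x+4)⁻¹*(x+y+z+5)⁻¹*(x+y+z+6)⁻¹ + (-1)*y*z*z*(x+1)⁻¹*(x+2)⁻¹*(y+2)⁻¹*(z+1)⁻¹*(z+2)⁻¹*(z+x+3)⁻¹*(z+x+4)⁻¹*(x+y+z+5)⁻¹*(x+y+z+6)⁻¹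 + 6*x*(x+1)⁻¹*(x+2)⁻¹*(y+2)⁻¹*(z+1)⁻¹*(z+2)⁻¹*(z+x+3)⁻¹*(z+x+4)⁻¹*(x+y+z+5)⁻¹*(x+y+z+6)⁻¹ + 3*x*y*(x+1)⁻¹*(x+2)⁻¹*(y+2)⁻¹*(z+1)⁻¹*(z+2)⁻¹*(z+x+3)⁻¹*(z+x+4)⁻¹*(x+y+z+5)⁻¹*(x+y+z+6)⁻¹ + 2*x*x*(x+1)⁻¹*(x+2)⁻¹*(y+2)⁻¹*(z+1)⁻¹*(z+2)⁻¹*(z+x+3)⁻¹*(z+x+4)⁻¹*(x+y+z+5)⁻¹*(x+y+z+6)⁻¹ + x*x*y*(x+1)⁻¹*(x+2)⁻¹*(y+2)⁻¹*(z+1)⁻¹*(z+2)⁻¹*(z+x+3)⁻¹*(z+x+4)⁻¹*(x+y+z+5)⁻¹*(x+y+z+6)⁻¹) * hB1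
      + ((-1)*(z+1)⁻¹*(z+2)⁻¹*(y+z+3)⁻¹*(y+z+4)⁻¹*(x+y+z+5)⁻¹*(x+y+z+6)⁻¹ + (x+1)⁻¹*(x+2)⁻¹*(x+y+3)⁻¹*(x+y+4)⁻¹*(x+y+z+5)⁻¹*(x+y+z+6)⁻¹ + (-1)*(x+1)⁻¹*(x+2)⁻¹*(z+1)⁻¹*(z+2)⁻¹*(x+y+3)⁻¹*(x+y+4)⁻¹ + (x+1)⁻¹*(x+2)⁻¹*(z+1)⁻¹*(z+2)⁻¹*(y+z+3)⁻¹*(y+z+4)⁻¹ + (-3)*z*(x+1)⁻¹*(x+2)⁻¹*(z+1)⁻¹*(z+2)⁻¹*(z+x+3)⁻¹*(z+x+4)⁻¹*(x+y+z+5)⁻¹*(x+y+z+6)⁻¹ + (-1)*z*z*(x+1)⁻¹*(x+2)⁻¹*(z+1)⁻¹*(z+2)⁻¹*(z+x+3)⁻¹*(z+x+4)⁻¹*(x+y+z+5)⁻¹*(x+y+z+6)⁻¹ + 3*x*(x+1)⁻¹*(x+2)⁻¹*(z+1)⁻¹*(z+2)⁻¹*(z+x+3)⁻¹*(z+x+4)⁻¹*(x+y+z+5)⁻¹*(x+y+z+6)⁻¹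 + x*x*(x+1)⁻¹*(x+2)⁻¹*(z+1)⁻¹*(z+2)⁻¹*(z+x+3)⁻¹*(z+x+4)⁻¹*(x+y+z+5)⁻¹*(x+y+z+6)⁻¹) * hB2
      + (2*(y+1)⁻¹*(y+2)⁻¹*(z+2)⁻¹*(y+z+3)⁻¹*(y+z+4)⁻¹*(x+y+z+5)⁻¹*(x+y+z+6)⁻¹ + (-2)*(x+1)⁻¹*(x+2)⁻¹*(z+2)⁻¹*(z+x+3)⁻¹*(z+x+4)⁻¹*(x+y+z+5)⁻¹*(x+y+z+6)⁻¹ + 2*(x+1)⁻¹*(x+2)⁻¹*(y+1)⁻¹*(y+2)⁻¹*(z+2)⁻¹*(z+x+3)⁻¹*(z+x+4)⁻¹ + (-2)*(x+1)⁻¹*(x+2)⁻¹*(y+1)⁻¹*(y+2)⁻¹*(z+2)⁻¹*(y+z+3)⁻¹*(y+z+4)⁻¹ + z*(y+1)⁻¹*(y+2)⁻¹*(z+2)⁻¹*(y+z+3)⁻¹*(y+z+4)⁻¹*(x+y+z+5)⁻¹*(x+y+z+6)⁻¹ + (-1)*z*(x+1)⁻¹*(x+2)⁻¹*(z+2)⁻¹*(z+x+3)⁻¹*(z+x+4)⁻¹*(x+y+z+5)⁻¹*(x+y+z+6)⁻¹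 + z*(x+1)⁻¹*(x+2)⁻¹*(y+1)⁻¹*(y+2)⁻¹*(z+2)⁻¹*(z+x+3)⁻¹*(z+x+4)⁻¹ + (-1)*z*(x+1)⁻¹*(x+2)⁻¹*(y+1)⁻¹*(y+2)⁻¹*(z+2)⁻¹*(y+z+3)⁻¹*(y+z+4)⁻¹ + 6*y*(x+1)⁻¹*(x+2)⁻¹*(y+1)⁻¹*(y+2)⁻¹*(z+2)⁻¹*(x+y+3)⁻¹*(x+y+4)⁻¹*(x+y+z+5)⁻¹*(x+y+z+6)⁻¹ + 3*y*z*(x+1)⁻¹*(x+2)⁻¹*(y+1)⁻¹*(y+2)⁻¹*(z+2)⁻¹*(x+y+3)⁻¹*(x+y+4)⁻¹*(x+y+z+5)⁻¹*(x+y+z+6)⁻¹ + 2*y*y*(x+1)⁻¹*(x+2)⁻¹*(y+1)⁻¹*(y+2)⁻¹*(z+2)⁻¹*(x+y+3)⁻¹*(x+y+4)⁻¹*(x+y+z+5)⁻¹*(x+y+z+6)⁻¹ + y*y*z*(x+1)⁻¹*(x+2)⁻¹*(y+1)⁻¹*(y+2)⁻¹*(z+2)⁻¹*(x+y+3)⁻¹*(x+y+4)⁻¹*(x+y+z+5)⁻¹*(x+y+z+6)⁻¹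 + (-6)*x*(x+1)⁻¹*(x+2)⁻¹*(y+1)⁻¹*(y+2)⁻¹*(z+2)⁻¹*(x+y+3)⁻¹*(x+y+4)⁻¹*(x+y+z+5)⁻¹*(x+y+z+6)⁻¹ + (-3)*x*z*(x+1)⁻¹*(x+2)⁻¹*(y+1)⁻¹*(y+2)⁻¹*(z+2)⁻¹*(x+y+3)⁻¹*(x+y+4)⁻¹*(x+y+z+5)⁻¹*(x+y+z+6)⁻¹ + (-2)*x*x*(x+1)⁻¹*(x+2)⁻¹*(y+1)⁻¹*(y+2)⁻¹*(z+2)⁻¹*(x+y+3)⁻¹*(x+y+4)⁻¹*(x+y+z+5)⁻¹*(x+y+z+6)⁻¹ + (-1)*x*x*z*(x+1)⁻¹*(x+2)⁻¹*(y+1)⁻¹*(y+2)⁻¹*(z+2)⁻¹*(x+y+3)⁻¹*(x+y+4)⁻¹*(x+y+z+5)⁻¹*(x+y+z+6)⁻¹) * hC1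
      + ((y+1)⁻¹*(y+2)⁻¹*(y+z+3)⁻¹*(y+z+4)⁻¹*(x+y+z+5)⁻¹*(x+y+z+6)⁻¹ + (-1)*(x+1)⁻¹*(x+2)⁻¹*(z+x+3)⁻¹*(z+x+4)⁻¹*(x+y+z+5)⁻¹*(x+y+z+6)⁻¹ + (x+1)⁻¹*(x+2)⁻¹*(y+1)⁻¹*(y+2)⁻¹*(z+x+3)⁻¹*(z+x+4)⁻¹ + (-1)*(x+1)⁻¹*(x+2)⁻¹*(y+1)⁻¹*(y+2)⁻¹*(y+z+3)⁻¹*(y+z+4)⁻¹ + 3*y*(x+1)⁻¹*(x+2)⁻¹*(y+1)⁻¹*(y+2)⁻¹*(x+y+3)⁻¹*(x+y+4)⁻¹*(x+y+z+5)⁻¹*(x+y+z+6)⁻¹ + y*y*(x+1)⁻¹*(x+2)⁻¹*(y+1)⁻¹*(y+2)⁻¹*(x+y+3)⁻¹*(x+y+4)⁻¹*(x+y+z+5)⁻¹*(x+y+z+6)⁻¹ + (-3)*x*(x+1)⁻¹*(x+2)⁻¹*(y+1)⁻¹*(y+2)⁻¹*(x+y+3)⁻¹*(x+y+4)⁻¹*(x+y+z+5)⁻¹*(x+y+z+6)⁻¹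 + (-1)*x*x*(x+1)⁻¹*(x+2)⁻¹*(y+1)⁻¹*(y+2)⁻¹*(x+y+3)⁻¹*(x+y+4)⁻¹*(x+y+z+5)⁻¹*(x+y+z+6)⁻¹) * hC2
      + (2*(x+2)⁻¹*(z+1)⁻¹*(z+2)⁻¹*(z+x+3)⁻¹*(z+x+4)⁻¹*(x+y+z+5)⁻¹*(x+y+z+6)⁻¹ + (-2)*(x+2)⁻¹*(y+1)⁻¹*(y+2)⁻¹*(x+y+3)⁻¹*(x+y+4)⁻¹*(x+y+z+5)⁻¹*(x+y+z+6)⁻¹ + 2*(x+2)⁻¹*(y+1)⁻¹*(y+2)⁻¹*(z+1)⁻¹*(z+2)⁻¹*(x+y+3)⁻¹*(x+y+4)⁻¹ + (-2)*(x+2)⁻¹*(y+1)⁻¹*(y+2)⁻¹*(z+1)⁻¹*(z+2)⁻¹*(z+x+3)⁻¹*(z+x+4)⁻¹ + 6*z*(x+2)⁻¹*(y+1)⁻¹*(y+2)⁻¹*(z+1)⁻¹*(z+2)⁻¹*(y+z+3)⁻¹*(y+z+4)⁻¹*(x+y+z+5)⁻¹*(x+y+z+6)⁻¹ + 2*z*z*(x+2)⁻¹*(y+1)⁻¹*(y+2)⁻¹*(z+1)⁻¹*(z+2)⁻¹*(y+z+3)⁻¹*(y+z+4)⁻¹*(x+y+z+5)⁻¹*(x+y+z+6)⁻¹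 + (-6)*y*(x+2)⁻¹*(y+1)⁻¹*(y+2)⁻¹*(z+1)⁻¹*(z+2)⁻¹*(y+z+3)⁻¹*(y+z+4)⁻¹*(x+y+z+5)⁻¹*(x+y+z+6)⁻¹ + (-2)*y*y*(x+2)⁻¹*(y+1)⁻¹*(y+2)⁻¹*(z+1)⁻¹*(z+2)⁻¹*(y+z+3)⁻¹*(y+z+4)⁻¹*(x+y+z+5)⁻¹*(x+y+z+6)⁻¹ + x*(x+2)⁻¹*(z+1)⁻¹*(z+2)⁻¹*(z+x+3)⁻¹*(z+x+4)⁻¹*(x+y+z+5)⁻¹*(x+y+z+6)⁻¹ + (-1)*x*(x+2)⁻¹*(y+1)⁻¹*(y+2)⁻¹*(x+y+3)⁻¹*(x+y+4)⁻¹*(x+y+z+5)⁻¹*(x+y+z+6)⁻¹ + x*(x+2)⁻¹*(y+1)⁻¹*(y+2)⁻¹*(z+1)⁻¹*(z+2)⁻¹*(x+y+3)⁻¹*(x+y+4)⁻¹ + (-1)*x*(x+2)⁻¹*(y+1)⁻¹*(y+2)⁻¹*(z+1)⁻¹*(z+2)⁻¹*(z+x+3)⁻¹*(z+x+4)⁻¹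 + 3*x*z*(x+2)⁻¹*(y+1)⁻¹*(y+2)⁻¹*(z+1)⁻¹*(z+2)⁻¹*(y+z+3)⁻¹*(y+z+4)⁻¹*(x+y+z+5)⁻¹*(x+y+z+6)⁻¹ + x*z*z*(x+2)⁻¹*(y+1)⁻¹*(y+2)⁻¹*(z+1)⁻¹*(z+2)⁻¹*(y+z+3)⁻¹*(y+z+4)⁻¹*(x+y+z+5)⁻¹*(x+y+z+6)⁻¹ + (-3)*x*y*(x+2)⁻¹*(y+1)⁻¹*(y+2)⁻¹*(z+1)⁻¹*(z+2)⁻¹*(y+z+3)⁻¹*(y+z+4)⁻¹*(x+y+z+5)⁻¹*(x+y+z+6)⁻¹ + (-1)*x*y*y*(x+2)⁻¹*(y+1)⁻¹*(y+2)⁻¹*(z+1)⁻¹*(z+2)⁻¹*(y+z+3)⁻¹*(y+z+4)⁻¹*(x+y+z+5)⁻¹*(x+y+z+6)⁻¹) * hA1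
      + ((z+1)⁻¹*(z+2)⁻¹*(z+x+3)⁻¹*(z+x+4)⁻¹*(x+y+z+5)⁻¹*(x+y+z+6)⁻¹ + (-1)*(y+1)⁻¹*(y+2)⁻¹*(x+y+3)⁻¹*(x+y+4)⁻¹*(x+y+z+5)⁻¹*(x+y+z+6)⁻¹ + (y+1)⁻¹*(y+2)⁻¹*(z+1)⁻¹*(z+2)⁻¹*(x+y+3)⁻¹*(x+y+4)⁻¹ + (-1)*(y+1)⁻¹*(y+2)⁻¹*(z+1)⁻¹*(z+2)⁻¹*(z+x+3)⁻¹*(z+x+4)⁻¹ + 3*z*(y+1)⁻¹*(y+2)⁻¹*(z+1)⁻¹*(z+2)⁻¹*(y+z+3)⁻¹*(y+z+4)⁻¹*(x+y+z+5)⁻¹*(x+y+z+6)⁻¹ + z*z*(y+1)⁻¹*(y+2)⁻¹*(z+1)⁻¹*(z+2)⁻¹*(y+z+3)⁻¹*(y+z+4)⁻¹*(x+y+z+5)⁻¹*(x+y+z+6)⁻¹ + (-3)*y*(y+1)⁻¹*(y+2)⁻¹*(z+1)⁻¹*(z+2)⁻¹*(y+z+3)⁻¹*(y+z+4)⁻¹*(x+y+z+5)⁻¹*(x+y+z+6)⁻¹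 + (-1)*y*y*(y+1)⁻¹*(y+2)⁻¹*(z+1)⁻¹*(z+2)⁻¹*(y+z+3)⁻¹*(y+z+4)⁻¹*(x+y+z+5)⁻¹*(x+y+z+6)⁻¹) * hA2
      + (18*z*(x+1)⁻¹*(x+2)⁻¹*(y+1)⁻¹*(y+2)⁻¹*(z+1)⁻¹*(z+2)⁻¹*(z+x+3)⁻¹*(z+x+4)⁻¹*(x+y+z+6)⁻¹ + (-18)*z*(x+1)⁻¹*(x+2)⁻¹*(y+1)⁻¹*(y+2)⁻¹*(z+1)⁻¹*(z+2)⁻¹*(y+z+3)⁻¹*(y+z+4)⁻¹*(x+y+z+6)⁻¹ + 9*z*z*(x+1)⁻¹*(x+2)⁻¹*(y+1)⁻¹*(y+2)⁻¹*(z+1)⁻¹*(z+2)⁻¹*(z+x+3)⁻¹*(z+x+4)⁻¹*(x+y+z+6)⁻¹ + (-9)*z*z*(x+1)⁻¹*(x+2)⁻¹*(y+1)⁻¹*(y+2)⁻¹*(z+1)⁻¹*(z+2)⁻¹*(y+z+3)⁻¹*(y+z+4)⁻¹*(x+y+z+6)⁻¹ + z*z*z*(x+1)⁻¹*(x+2)⁻¹*(y+1)⁻¹*(y+2)⁻¹*(z+1)⁻¹*(z+2)⁻¹*(z+x+3)⁻¹*(z+x+4)⁻¹*(x+y+z+6)⁻¹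 + (-1)*z*z*z*(x+1)⁻¹*(x+2)⁻¹*(y+1)⁻¹*(y+2)⁻¹*(z+1)⁻¹*(z+2)⁻¹*(y+z+3)⁻¹*(y+z+4)⁻¹*(x+y+z+6)⁻¹ + (-18)*y*(x+1)⁻¹*(x+2)⁻¹*(y+1)⁻¹*(y+2)⁻¹*(z+1)⁻¹*(z+2)⁻¹*(x+y+3)⁻¹*(x+y+4)⁻¹*(x+y+z+6)⁻¹ + 18*y*(x+1)⁻¹*(x+2)⁻¹*(y+1)⁻¹*(y+2)⁻¹*(z+1)⁻¹*(z+2)⁻¹*(y+z+3)⁻¹*(y+z+4)⁻¹*(x+y+z+6)⁻¹ + (-3)*y*z*(x+1)⁻¹*(x+2)⁻¹*(y+1)⁻¹*(y+2)⁻¹*(z+1)⁻¹*(z+2)⁻¹*(x+y+3)⁻¹*(x+y+4)⁻¹*(x+y+z+6)⁻¹ + 3*y*z*(x+1)⁻¹*(x+2)⁻¹*(y+1)⁻¹*(y+2)⁻¹*(z+1)⁻¹*(z+2)⁻¹*(z+x+3)⁻¹*(z+x+4)⁻¹*(x+y+z+6)⁻¹ + y*z*z*(x+1)⁻¹*(x+2)⁻¹*(y+1)⁻¹*(y+2)⁻¹*(z+1)⁻¹*(z+2)⁻¹*(z+x+3)⁻¹*(z+x+4)⁻¹*(x+y+z+6)⁻¹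 + (-1)*y*z*z*(x+1)⁻¹*(x+2)⁻¹*(y+1)⁻¹*(y+2)⁻¹*(z+1)⁻¹*(z+2)⁻¹*(y+z+3)⁻¹*(y+z+4)⁻¹*(x+y+z+6)⁻¹ + (-9)*y*y*(x+1)⁻¹*(x+2)⁻¹*(y+1)⁻¹*(y+2)⁻¹*(z+1)⁻¹*(z+2)⁻¹*(x+y+3)⁻¹*(x+y+4)⁻¹*(x+y+z+6)⁻¹ + 9*y*y*(x+1)⁻¹*(x+2)⁻¹*(y+1)⁻¹*(y+2)⁻¹*(z+1)⁻¹*(z+2)⁻¹*(y+z+3)⁻¹*(y+z+4)⁻¹*(x+y+z+6)⁻¹ + (-1)*y*y*z*(x+1)⁻¹*(x+2)⁻¹*(y+1)⁻¹*(y+2)⁻¹*(z+1)⁻¹*(z+2)⁻¹*(x+y+3)⁻¹*(x+y+4)⁻¹*(x+y+z+6)⁻¹ + y*y*z*(x+1)⁻¹*(x+2)⁻¹*(y+1)⁻¹*(y+2)⁻¹*(z+1)⁻¹*(z+2)⁻¹*(y+z+3)⁻¹*(y+z+4)⁻¹*(x+y+z+6)⁻¹ + (-1)*y*y*y*(x+1)⁻¹*(x+2)⁻¹*(y+1)⁻¹*(y+2)⁻¹*(z+1)⁻¹*(z+2)⁻¹*(x+y+3)⁻¹*(x+y+4)⁻¹*(x+y+z+6)⁻¹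 + y*y*y*(x+1)⁻¹*(x+2)⁻¹*(y+1)⁻¹*(y+2)⁻¹*(z+1)⁻¹*(z+2)⁻¹*(y+z+3)⁻¹*(y+z+4)⁻¹*(x+y+z+6)⁻¹ + 18*x*(x+1)⁻¹*(x+2)⁻¹*(y+1)⁻¹*(y+2)⁻¹*(z+1)⁻¹*(z+2)⁻¹*(x+y+3)⁻¹*(x+y+4)⁻¹*(x+y+z+6)⁻¹ + (-18)*x*(x+1)⁻¹*(x+2)⁻¹*(y+1)⁻¹*(y+2)⁻¹*(z+1)⁻¹*(z+2)⁻¹*(z+x+3)⁻¹*(z+x+4)⁻¹*(x+y+z+6)⁻¹ + 3*x*z*(x+1)⁻¹*(x+2)⁻¹*(y+1)⁻¹*(y+2)⁻¹*(z+1)⁻¹*(z+2)⁻¹*(x+y+3)⁻¹*(x+y+4)⁻¹*(x+y+z+6)⁻¹ + (-3)*x*z*(x+1)⁻¹*(x+2)⁻¹*(y+1)⁻¹*(y+2)⁻¹*(z+1)⁻¹*(z+2)⁻¹*(y+z+3)⁻¹*(y+z+4)⁻¹*(x+y+z+6)⁻¹ + x*z*z*(x+1)⁻¹*(x+2)⁻¹*(y+1)⁻¹*(y+2)⁻¹*(z+1)⁻¹*(z+2)⁻¹*(z+x+3)⁻¹*(z+x+4)⁻¹*(x+y+z+6)⁻¹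 + (-1)*x*z*z*(x+1)⁻¹*(x+2)⁻¹*(y+1)⁻¹*(y+2)⁻¹*(z+1)⁻¹*(z+2)⁻¹*(y+z+3)⁻¹*(y+z+4)⁻¹*(x+y+z+6)⁻¹ + (-3)*x*y*(x+1)⁻¹*(x+2)⁻¹*(y+1)⁻¹*(y+2)⁻¹*(z+1)⁻¹*(z+2)⁻¹*(z+x+3)⁻¹*(z+x+4)⁻¹*(x+y+z+6)⁻¹ + 3*x*y*(x+1)⁻¹*(x+2)⁻¹*(y+1)⁻¹*(y+2)⁻¹*(z+1)⁻¹*(z+2)⁻¹*(y+z+3)⁻¹*(y+z+4)⁻¹*(x+y+z+6)⁻¹ + (-1)*x*y*y*(x+1)⁻¹*(x+2)⁻¹*(y+1)⁻¹*(y+2)⁻¹*(z+1)⁻¹*(z+2)⁻¹*(x+y+3)⁻¹*(x+y+4)⁻¹*(x+y+z+6)⁻¹ + x*y*y*(x+1)⁻¹*(x+2)⁻¹*(y+1)⁻¹*(y+2)⁻¹*(z+1)⁻¹*(z+2)⁻¹*(y+z+3)⁻¹*(y+z+4)⁻¹*(x+y+z+6)⁻¹ + 9*x*x*(x+1)⁻¹*(x+2)⁻¹*(y+1)⁻¹*(y+2)⁻¹*(z+1)⁻¹*(z+2)⁻¹*(x+y+3)⁻¹*(x+y+4)⁻¹*(x+y+z+6)⁻¹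 + (-9)*x*x*(x+1)⁻¹*(x+2)⁻¹*(y+1)⁻¹*(y+2)⁻¹*(z+1)⁻¹*(z+2)⁻¹*(z+x+3)⁻¹*(z+x+4)⁻¹*(x+y+z+6)⁻¹ + x*x*z*(x+1)⁻¹*(x+2)⁻¹*(y+1)⁻¹*(y+2)⁻¹*(z+1)⁻¹*(z+2)⁻¹*(x+y+3)⁻¹*(x+y+4)⁻¹*(x+y+z+6)⁻¹ + (-1)*x*x*z*(x+1)⁻¹*(x+2)⁻¹*(y+1)⁻¹*(y+2)⁻¹*(z+1)⁻¹*(z+2)⁻¹*(z+x+3)⁻¹*(z+x+4)⁻¹*(x+y+z+6)⁻¹ + x*x*y*(x+1)⁻¹*(x+2)⁻¹*(y+1)⁻¹*(y+2)⁻¹*(z+1)⁻¹*(z+2)⁻¹*(x+y+3)⁻¹*(x+y+4)⁻¹*(x+y+z+6)⁻¹ + (-1)*x*x*y*(x+1)⁻¹*(x+2)⁻¹*(y+1)⁻¹*(y+2)⁻¹*(z+1)⁻¹*(z+2)⁻¹*(z+x+3)⁻¹*(z+x+4)⁻¹*(x+y+z+6)⁻¹ + x*x*x*(x+1)⁻¹*(x+2)⁻¹*(y+1)⁻¹*(y+2)⁻¹*(z+1)⁻¹*(z+2)⁻¹*(x+y+3)⁻¹*(x+y+4)⁻¹*(x+y+z+6)⁻¹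 + (-1)*x*x*x*(x+1)⁻¹*(x+2)⁻¹*(y+1)⁻¹*(y+2)⁻¹*(z+1)⁻¹*(z+2)⁻¹*(z+x+3)⁻¹*(z+x+4)⁻¹*(x+y+z+6)⁻¹) * hG1
      + (3*z*(x+1)⁻¹*(x+2)⁻¹*(y+1)⁻¹*(y+2)⁻¹*(z+1)⁻¹*(z+2)⁻¹*(z+x+3)⁻¹*(z+x+4)⁻¹ + (-3)*z*(x+1)⁻¹*(x+2)⁻¹*(y+1)⁻¹*(y+2)⁻¹*(z+1)⁻¹*(z+2)⁻¹*(y+z+3)⁻¹*(y+z+4)⁻¹ + z*z*(x+1)⁻¹*(x+2)⁻¹*(y+1)⁻¹*(y+2)⁻¹*(z+1)⁻¹*(z+2)⁻¹*(z+x+3)⁻¹*(z+x+4)⁻¹ + (-1)*z*z*(x+1)⁻¹*(x+2)⁻¹*(y+1)⁻¹*(y+2)⁻¹*(z+1)⁻¹*(z+2)⁻¹*(y+z+3)⁻¹*(y+z+4)⁻¹ + (-3)*y*(x+1)⁻¹*(x+2)⁻¹*(y+1)⁻¹*(y+2)⁻¹*(z+1)⁻¹*(z+2)⁻¹*(x+y+3)⁻¹*(x+y+4)⁻¹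 + 3*y*(x+1)⁻¹*(x+2)⁻¹*(y+1)⁻¹*(y+2)⁻¹*(z+1)⁻¹*(z+2)⁻¹*(y+z+3)⁻¹*(y+z+4)⁻¹ + (-1)*y*y*(x+1)⁻¹*(x+2)⁻¹*(y+1)⁻¹*(y+2)⁻¹*(z+1)⁻¹*(z+2)⁻¹*(x+y+3)⁻¹*(x+y+4)⁻¹ + y*y*(x+1)⁻¹*(x+2)⁻¹*(y+1)⁻¹*(y+2)⁻¹*(z+1)⁻¹*(z+2)⁻¹*(y+z+3)⁻¹*(y+z+4)⁻¹ + 3*x*(x+1)⁻¹*(x+2)⁻¹*(y+1)⁻¹*(y+2)⁻¹*(z+1)⁻¹*(z+2)⁻¹*(x+y+3)⁻¹*(x+y+4)⁻¹ + (-3)*x*(x+1)⁻¹*(x+2)⁻¹*(y+1)⁻¹*(y+2)⁻¹*(z+1)⁻¹*(z+2)⁻¹*(z+x+3)⁻¹*(z+x+4)⁻¹ + x*x*(x+1)⁻¹*(x+2)⁻¹*(y+1)⁻¹*(y+2)⁻¹*(z+1)⁻¹*(z+2)⁻¹*(x+y+3)⁻¹*(x+y+4)⁻¹ + (-1)*x*x*(x+1)⁻¹*(x+2)⁻¹*(y+1)⁻¹*(y+2)⁻¹*(z+1)⁻¹*(z+2)⁻¹*(z+x+3)⁻¹*(z+x+4)⁻¹)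 * hG2
      + (28*z*(x+1)⁻¹*(x+2)⁻¹*(y+1)⁻¹*(y+2)⁻¹*(z+1)⁻¹*(z+2)⁻¹*(y+z+4)⁻¹*(x+y+z+5)⁻¹*(x+y+z+6)⁻¹ + 11*z*z*(x+1)⁻¹*(x+2)⁻¹*(y+1)⁻¹*(y+2)⁻¹*(z+1)⁻¹*(z+2)⁻¹*(y+z+4)⁻¹*(x+y+z+5)⁻¹*(x+y+z+6)⁻¹ + z*z*z*(x+1)⁻¹*(x+2)⁻¹*(y+1)⁻¹*(y+2)⁻¹*(z+1)⁻¹*(z+2)⁻¹*(y+z+4)⁻¹*(x+y+z+5)⁻¹*(x+y+z+6)⁻¹ + (-28)*y*(x+1)⁻¹*(x+2)⁻¹*(y+1)⁻¹*(y+2)⁻¹*(z+1)⁻¹*(z+2)⁻¹*(y+z+4)⁻¹*(x+y+z+5)⁻¹*(x+y+z+6)⁻¹ + y*z*z*(x+1)⁻¹*(x+2)⁻¹*(y+1)⁻¹*(y+2)⁻¹*(z+1)⁻¹*(z+2)⁻¹*(y+z+4)⁻¹*(x+y+z+5)⁻¹*(x+y+z+6)⁻¹ + (-11)*y*y*(x+1)⁻¹*(x+2)⁻¹*(y+1)⁻¹*(y+2)⁻¹*(z+1)⁻¹*(z+2)⁻¹*(y+z+4)⁻¹*(x+y+z+5)⁻¹*(x+y+z+6)⁻¹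 + (-1)*y*y*z*(x+1)⁻¹*(x+2)⁻¹*(y+1)⁻¹*(y+2)⁻¹*(z+1)⁻¹*(z+2)⁻¹*(y+z+4)⁻¹*(x+y+z+5)⁻¹*(x+y+z+6)⁻¹ + (-1)*y*y*y*(x+1)⁻¹*(x+2)⁻¹*(y+1)⁻¹*(y+2)⁻¹*(z+1)⁻¹*(z+2)⁻¹*(y+z+4)⁻¹*(x+y+z+5)⁻¹*(x+y+z+6)⁻¹ + 8*x*z*(x+1)⁻¹*(x+2)⁻¹*(y+1)⁻¹*(y+2)⁻¹*(z+1)⁻¹*(z+2)⁻¹*(y+z+4)⁻¹*(x+y+z+5)⁻¹*(x+y+z+6)⁻¹ + 2*x*z*z*(x+1)⁻¹*(x+2)⁻¹*(y+1)⁻¹*(y+2)⁻¹*(z+1)⁻¹*(z+2)⁻¹*(y+z+4)⁻¹*(x+y+z+5)⁻¹*(x+y+z+6)⁻¹ + (-8)*x*y*(x+1)⁻¹*(x+2)⁻¹*(y+1)⁻¹*(y+2)⁻¹*(z+1)⁻¹*(z+2)⁻¹*(y+z+4)⁻¹*(x+y+z+5)⁻¹*(x+y+z+6)⁻¹ + (-2)*x*y*y*(x+1)⁻¹*(x+2)⁻¹*(y+1)⁻¹*(y+2)⁻¹*(z+1)⁻¹*(z+2)⁻¹*(y+z+4)⁻¹*(x+y+z+5)⁻¹*(x+y+z+6)⁻¹)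 * hD1
      + (7*z*(x+1)⁻¹*(x+2)⁻¹*(y+1)⁻¹*(y+2)⁻¹*(z+1)⁻¹*(z+2)⁻¹*(x+y+z+5)⁻¹*(x+y+z+6)⁻¹ + z*z*(x+1)⁻¹*(x+2)⁻¹*(y+1)⁻¹*(y+2)⁻¹*(z+1)⁻¹*(z+2)⁻¹*(x+y+z+5)⁻¹*(x+y+z+6)⁻¹ + (-7)*y*(x+1)⁻¹*(x+2)⁻¹*(y+1)⁻¹*(y+2)⁻¹*(z+1)⁻¹*(z+2)⁻¹*(x+y+z+5)⁻¹*(x+y+z+6)⁻¹ + (-1)*y*y*(x+1)⁻¹*(x+2)⁻¹*(y+1)⁻¹*(y+2)⁻¹*(z+1)⁻¹*(z+2)⁻¹*(x+y+z+5)⁻¹*(x+y+z+6)⁻¹ + 2*x*z*(x+1)⁻¹*(x+2)⁻¹*(y+1)⁻¹*(y+2)⁻¹*(z+1)⁻¹*(z+2)⁻¹*(x+y+z+5)⁻¹*(x+y+z+6)⁻¹ + (-2)*x*y*(x+1)⁻¹*(x+2)⁻¹*(y+1)⁻¹*(y+2)⁻¹*(z+1)⁻¹*(z+2)⁻¹*(x+y+z+5)⁻¹*(x+y+z+6)⁻¹)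 * hD2
      + ((-28)*z*(x+1)⁻¹*(x+2)⁻¹*(y+1)⁻¹*(y+2)⁻¹*(z+1)⁻¹*(z+2)⁻¹*(z+x+4)⁻¹*(x+y+z+5)⁻¹*(x+y+z+6)⁻¹ + (-11)*z*z*(x+1)⁻¹*(x+2)⁻¹*(y+1)⁻¹*(y+2)⁻¹*(z+1)⁻¹*(z+2)⁻¹*(z+x+4)⁻¹*(x+y+z+5)⁻¹*(x+y+z+6)⁻¹ + (-1)*z*z*z*(x+1)⁻¹*(x+2)⁻¹*(y+1)⁻¹*(y+2)⁻¹*(z+1)⁻¹*(z+2)⁻¹*(z+x+4)⁻¹*(x+y+z+5)⁻¹*(x+y+z+6)⁻¹ + (-8)*y*z*(x+1)⁻¹*(x+2)⁻¹*(y+1)⁻¹*(y+2)⁻¹*(z+1)⁻¹*(z+2)⁻¹*(z+x+4)⁻¹*(x+y+z+5)⁻¹*(x+y+z+6)⁻¹ + (-2)*y*z*z*(x+1)⁻¹*(x+2)⁻¹*(y+1)⁻¹*(y+2)⁻¹*(z+1)⁻¹*(z+2)⁻¹*(z+x+4)⁻¹*(x+y+z+5)⁻¹*(x+y+z+6)⁻¹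 + 28*x*(x+1)⁻¹*(x+2)⁻¹*(y+1)⁻¹*(y+2)⁻¹*(z+1)⁻¹*(z+2)⁻¹*(z+x+4)⁻¹*(x+y+z+5)⁻¹*(x+y+z+6)⁻¹ + (-1)*x*z*z*(x+1)⁻¹*(x+2)⁻¹*(y+1)⁻¹*(y+2)⁻¹*(z+1)⁻¹*(z+2)⁻¹*(z+x+4)⁻¹*(x+y+z+5)⁻¹*(x+y+z+6)⁻¹ + 8*x*y*(x+1)⁻¹*(x+2)⁻¹*(y+1)⁻¹*(y+2)⁻¹*(z+1)⁻¹*(z+2)⁻¹*(z+x+4)⁻¹*(x+y+z+5)⁻¹*(x+y+z+6)⁻¹ + 11*x*x*(x+1)⁻¹*(x+2)⁻¹*(y+1)⁻¹*(y+2)⁻¹*(z+1)⁻¹*(z+2)⁻¹*(z+x+4)⁻¹*(x+y+z+5)⁻¹*(x+y+z+6)⁻¹ + x*x*z*(x+1)⁻¹*(x+2)⁻¹*(y+1)⁻¹*(y+2)⁻¹*(z+1)⁻¹*(z+2)⁻¹*(z+x+4)⁻¹*(x+y+z+5)⁻¹*(x+y+z+6)⁻¹ + 2*x*x*y*(x+1)⁻¹*(x+2)⁻¹*(y+1)⁻¹*(y+2)⁻¹*(z+1)⁻¹*(z+2)⁻¹*(z+x+4)⁻¹*(x+y+z+5)⁻¹*(x+y+z+6)⁻¹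 + x*x*x*(x+1)⁻¹*(x+2)⁻¹*(y+1)⁻¹*(y+2)⁻¹*(z+1)⁻¹*(z+2)⁻¹*(z+x+4)⁻¹*(x+y+z+5)⁻¹*(x+y+z+6)⁻¹) * hE1
      + ((-7)*z*(x+1)⁻¹*(x+2)⁻¹*(y+1)⁻¹*(y+2)⁻¹*(z+1)⁻¹*(z+2)⁻¹*(x+y+z+5)⁻¹*(x+y+z+6)⁻¹ + (-1)*z*z*(x+1)⁻¹*(x+2)⁻¹*(y+1)⁻¹*(y+2)⁻¹*(z+1)⁻¹*(z+2)⁻¹*(x+y+z+5)⁻¹*(x+y+z+6)⁻¹ + (-2)*y*z*(x+1)⁻¹*(x+2)⁻¹*(y+1)⁻¹*(y+2)⁻¹*(z+1)⁻¹*(z+2)⁻¹*(x+y+z+5)⁻¹*(x+y+z+6)⁻¹ + 7*x*(x+1)⁻¹*(x+2)⁻¹*(y+1)⁻¹*(y+2)⁻¹*(z+1)⁻¹*(z+2)⁻¹*(x+y+z+5)⁻¹*(x+y+z+6)⁻¹ + 2*x*y*(x+1)⁻¹*(x+2)⁻¹*(y+1)⁻¹*(y+2)⁻¹*(z+1)⁻¹*(z+2)⁻¹*(x+y+z+5)⁻¹*(x+y+z+6)⁻¹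 + x*x*(x+1)⁻¹*(x+2)⁻¹*(y+1)⁻¹*(y+2)⁻¹*(z+1)⁻¹*(z+2)⁻¹*(x+y+z+5)⁻¹*(x+y+z+6)⁻¹) * hE2
      + (28*y*(x+1)⁻¹*(x+2)⁻¹*(y+1)⁻¹*(y+2)⁻¹*(z+1)⁻¹*(z+2)⁻¹*(x+y+4)⁻¹*(x+y+z+5)⁻¹*(x+y+z+6)⁻¹ + 8*y*z*(x+1)⁻¹*(x+2)⁻¹*(y+1)⁻¹*(y+2)⁻¹*(z+1)⁻¹*(z+2)⁻¹*(x+y+4)⁻¹*(x+y+z+5)⁻¹*(x+y+z+6)⁻¹ + 11*y*y*(x+1)⁻¹*(x+2)⁻¹*(y+1)⁻¹*(y+2)⁻¹*(z+1)⁻¹*(z+2)⁻¹*(x+y+4)⁻¹*(x+y+z+5)⁻¹*(x+y+z+6)⁻¹ + 2*y*y*z*(x+1)⁻¹*(x+2)⁻¹*(y+1)⁻¹*(y+2)⁻¹*(z+1)⁻¹*(z+2)⁻¹*(x+y+4)⁻¹*(x+y+z+5)⁻¹*(x+y+z+6)⁻¹ + y*y*y*(x+1)⁻¹*(x+2)⁻¹*(y+1)⁻¹*(y+2)⁻¹*(z+1)⁻¹*(z+2)⁻¹*(x+y+4)⁻¹*(x+y+z+5)⁻¹*(x+y+z+6)⁻¹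 + (-28)*x*(x+1)⁻¹*(x+2)⁻¹*(y+1)⁻¹*(y+2)⁻¹*(z+1)⁻¹*(z+2)⁻¹*(x+y+4)⁻¹*(x+y+z+5)⁻¹*(x+y+z+6)⁻¹ + (-8)*x*z*(x+1)⁻¹*(x+2)⁻¹*(y+1)⁻¹*(y+2)⁻¹*(z+1)⁻¹*(z+2)⁻¹*(x+y+4)⁻¹*(x+y+z+5)⁻¹*(x+y+z+6)⁻¹ + x*y*y*(x+1)⁻¹*(x+2)⁻¹*(y+1)⁻¹*(y+2)⁻¹*(z+1)⁻¹*(z+2)⁻¹*(x+y+4)⁻¹*(x+y+z+5)⁻¹*(x+y+z+6)⁻¹ + (-11)*x*x*(x+1)⁻¹*(x+2)⁻¹*(y+1)⁻¹*(y+2)⁻¹*(z+1)⁻¹*(z+2)⁻¹*(x+y+4)⁻¹*(x+y+z+5)⁻¹*(x+y+z+6)⁻¹ + (-2)*x*x*z*(x+1)⁻¹*(x+2)⁻¹*(y+1)⁻¹*(y+2)⁻¹*(z+1)⁻¹*(z+2)⁻¹*(x+y+4)⁻¹*(x+y+z+5)⁻¹*(x+y+z+6)⁻¹ + (-1)*x*x*y*(x+1)⁻¹*(x+2)⁻¹*(y+1)⁻¹*(y+2)⁻¹*(z+1)⁻¹*(z+2)⁻¹*(x+y+4)⁻¹*(x+y+z+5)⁻¹*(x+y+z+6)⁻¹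 + (-1)*x*x*x*(x+1)⁻¹*(x+2)⁻¹*(y+1)⁻¹*(y+2)⁻¹*(z+1)⁻¹*(z+2)⁻¹*(x+y+4)⁻¹*(x+y+z+5)⁻¹*(x+y+z+6)⁻¹) * hF1
      + (7*y*(x+1)⁻¹*(x+2)⁻¹*(y+1)⁻¹*(y+2)⁻¹*(z+1)⁻¹*(z+2)⁻¹*(x+y+z+5)⁻¹*(x+y+z+6)⁻¹ + 2*y*z*(x+1)⁻¹*(x+2)⁻¹*(y+1)⁻¹*(y+2)⁻¹*(z+1)⁻¹*(z+2)⁻¹*(x+y+z+5)⁻¹*(x+y+z+6)⁻¹ + y*y*(x+1)⁻¹*(x+2)⁻¹*(y+1)⁻¹*(y+2)⁻¹*(z+1)⁻¹*(z+2)⁻¹*(x+y+z+5)⁻¹*(x+y+z+6)⁻¹ + (-7)*x*(x+1)⁻¹*(x+2)⁻¹*(y+1)⁻¹*(y+2)⁻¹*(z+1)⁻¹*(z+2)⁻¹*(x+y+z+5)⁻¹*(x+y+z+6)⁻¹ + (-2)*x*z*(x+1)⁻¹*(x+2)⁻¹*(y+1)⁻¹*(y+2)⁻¹*(z+1)⁻¹*(z+2)⁻¹*(x+y+z+5)⁻¹*(x+y+z+6)⁻¹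 + (-1)*x*x*(x+1)⁻¹*(x+2)⁻¹*(y+1)⁻¹*(y+2)⁻¹*(z+1)⁻¹*(z+2)⁻¹*(x+y+z+5)⁻¹*(x+y+z+6)⁻¹) * hF2

section Aux

variable {K : Type*} [Field K] [CharZero K] (J : Polynomial K →ₗ[K] Polynomial K)

/-- `E y z = J²(y · J² z) − J² y · J² z`. -/
noncomputable def Efun (y z : Polynomial K) : Polynomial K :=
  J (J (y * J (J z))) - J (J y) * J (J z)

/-- Trilinear combination whose vanishing gives the theorem. -/
noncomputable def Tfun (b c d : Polynomial K) : Polynomial K :=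
  Efun J b (sbrk J c d) + Efun J c (sbrk J d b) + Efun J d (sbrk J b c)

lemma sassoc_eq (a b z : Polynomial K) : sassoc J a b z = a * Efun J b z := by
  simp only [sassoc, star2, Efun]
  ring

lemma Efun_add_left (y y' z : Polynomial K) :
    Efun J (y + y') z = Efun J y z + Efun J y' z := by
  simp only [Efun, add_mul, map_add]
  ring

lemma Efun_add_right (y z z' : Polynomial K) :
    Efun J y (z + z') = Efun J y z + Efun J y z' := by
  simp only [Efun, map_add, mul_add]
  ring

lemma Efun_smul_left (k : K) (y z : Polynomial K) :
    Efun J (k • y) z = k • Efun J y z := by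
  simp only [Efun, smul_mul_assoc, map_smul, smul_sub]

lemma Efun_smul_right (k : K) (y z : Polynomial K) :
    Efun J y (k • z) = k • Efun J y z := by
  simp only [Efun, map_smul, mul_smul_comm, smul_sub]

lemma sbrk_add_left (b b' c : Polynomial K) :
    sbrk J (b + b') c = sbrk J b c + sbrk J b' c := by
  simp only [sbrk, star2, add_mul, map_add, mul_add]
  ring

lemma sbrk_add_right (b c c' : Polynomial K) :
    sbrk J b (c + c') = sbrk J b c + sbrk J b c' := by
  simp only [sbrk, star2, add_mul, map_add, mul_add]
  ring

lemma sbrk_smul_left (k : K) (b c : Polynomial K) :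
    sbrk J (k • b) c = k • sbrk J b c := by
  simp only [sbrk, star2, smul_mul_assoc, map_smul, mul_smul_comm, smul_sub]

lemma sbrk_smul_right (k : K) (b c : Polynomial K) :
    sbrk J b (k • c) = k • sbrk J b c := by
  simp only [sbrk, star2, smul_mul_assoc, map_smul, mul_smul_comm, smul_sub]

lemma Tfun_add1 (b b' c d : Polynomial K) :
    Tfun J (b + b') c d = Tfun J b c d + Tfun J b' c d := by
  simp only [Tfun, Efun_add_left, sbrk_add_left, sbrk_add_right, Efun_add_right]
  ring

lemma Tfun_add2 (b c c' d : Polynomial K) :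
    Tfun J b (c + c') d = Tfun J b c d + Tfun J b c' d := by
  simp only [Tfun, Efun_add_left, sbrk_add_left, sbrk_add_right, Efun_add_right]
  ring

lemma Tfun_add3 (b c d d' : Polynomial K) :
    Tfun J b c (d + d') = Tfun J b c d + Tfun J b c d' := by
  simp only [Tfun, Efun_add_left, sbrk_add_left, sbrk_add_right, Efun_add_right]
  ring

lemma Tfun_smul1 (k : K) (b c d : Polynomial K) :
    Tfun J (k • b) c d = k • Tfun J b c d := by
  simp only [Tfun, Efun_smul_left, sbrk_smul_left, sbrk_smul_right, Efun_smul_right,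
    smul_add]

lemma Tfun_smul2 (k : K) (b c d : Polynomial K) :
    Tfun J b (k • c) d = k • Tfun J b c d := by
  simp only [Tfun, Efun_smul_left, sbrk_smul_left, sbrk_smul_right, Efun_smul_right,
    smul_add]

lemma Tfun_smul3 (k : K) (b c d : Polynomial K) :
    Tfun J b c (k • d) = k • Tfun J b c d := by
  simp only [Tfun, Efun_smul_left, sbrk_smul_left, sbrk_smul_right, Efun_smul_right,
    smul_add]

/-- Abbreviation for `1/((n+1)(n+2))`. -/
noncomputable def gg (n : ℕ) : K := ((n : K) + 1)⁻¹ * ((n : K) + 2)⁻¹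

variable (hJ : ∀ m : ℕ, J (X ^ m) = (((m : K) + 1)⁻¹) • X ^ (m + 1))

include hJ

lemma J2_pow (m : ℕ) : J (J (X ^ m)) = (gg m : K) • X ^ (m + 2) := by
  rw [hJ, map_smul, hJ, smul_smul, gg]
  norm_num
  push_cast
  ring_nf
  simp

lemma sbrk_pow (q r : ℕ) :
    sbrk J (X ^ q) (X ^ r) = ((gg r - gg q : K)) • X ^ (q + r + 2) := by
  rw [sbrk, star2, star2, J2_pow J hJ, J2_pow J hJ, mul_smul_comm, mul_smul_comm,
    ← pow_add, ← pow_add, show q + (r + 2) = q + r + 2 from by omega,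
    show r + (q + 2) = q + r + 2 from by omega, ← sub_smul]

lemma Efun_pow (m s : ℕ) :
    Efun J (X ^ m) (X ^ s) = ((gg s * (gg (m + s + 2) - gg m) : K)) • X ^ (m + s + 4) := by
  rw [Efun, J2_pow J hJ, J2_pow J hJ, mul_smul_comm, ← pow_add, map_smul, map_smul,
    J2_pow J hJ, smul_smul, mul_smul_comm, smul_mul_assoc, smul_smul, ← pow_add]
  rw [show m + (s + 2) + 2 = m + s + 4 from by omega, show m + 2 + (s + 2) = m + s + 4 from by omega,
    ← sub_smul]
  congr 1
  ring

lemma cast_ne (n : ℕ) (hn : 0 < n) : ((n : K)) ≠ 0 := by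
  exact_mod_cast Nat.cast_ne_zero.2 hn.ne'

lemma gg_scalar_identity (p q r : ℕ) :
    (gg r - gg q : K) * (gg (q + r + 2) * (gg (p + q + r + 4) - gg p))
      + (gg p - gg r) * (gg (r + p + 2) * (gg (p + q + r + 4) - gg q))
      + (gg q - gg p) * (gg (p + q + 2) * (gg (p + q + r + 4) - gg r)) = 0 := by
  have key : ∀ (n : ℕ) (x : K), x = ((n + 1 : ℕ) : K) → x ≠ 0 := by
    intro n x h
    rw [h]
    exact_mod_cast Nat.succ_ne_zero n
  have main := scalar_id ((p : K)) ((q : K)) ((r : K))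
    (key p _ (by push_cast; ring)) (key (p+1) _ (by push_cast; ring))
    (key q _ (by push_cast; ring)) (key (q+1) _ (by push_cast; ring))
    (key r _ (by push_cast; ring)) (key (r+1) _ (by push_cast; ring))
    (key (q+r+2) _ (by push_cast; ring)) (key (q+r+3) _ (by push_cast; ring))
    (key (r+p+2) _ (by push_cast; ring)) (key (r+p+3) _ (by push_cast; ring))
    (key (p+q+2) _ (by push_cast; ring)) (key (p+q+3) _ (by push_cast; ring))
    (key (p+q+r+4) _ (by push_cast; ring)) (key (p+q+r+5) _ (by push_cast; ring))
  simp only [gg]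
  push_cast
  linear_combination main

lemma Tfun_pow (p q r : ℕ) : Tfun J (X ^ p) (X ^ q) (X ^ r) = 0 := by
  rw [Tfun, sbrk_pow J hJ, sbrk_pow J hJ, sbrk_pow J hJ,
    Efun_smul_right, Efun_smul_right, Efun_smul_right,
    Efun_pow J hJ, Efun_pow J hJ, Efun_pow J hJ, smul_smul, smul_smul, smul_smul]
  rw [show p + (q + r + 2) + 2 = p + q + r + 4 from by omega,
    show q + (r + p + 2) + 2 = p + q + r + 4 from by omega,
    show r + (p + q + 2) + 2 = p + q + r + 4 from by omega,
    show p + (q + r + 2) + 4 = p + q + r + 6 from by omega,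
    show q + (r + p + 2) + 4 = p + q + r + 6 from by omega,
    show r + (p + q + 2) + 4 = p + q + r + 6 from by omega,
    ← add_smul, ← add_smul]
  rw [smul_eq_zero]
  left
  linear_combination gg_scalar_identity J hJ p q r

lemma Tfun_eq_zero : ∀ b c d : Polynomial K, Tfun J b c d = 0 := by
  intro b c d
  induction b using Polynomial.induction_on' with
  | add u v hu hv => rw [Tfun_add1, hu, hv, add_zero]
  | monomial n a =>
    rw [← C_mul_X_pow_eq_monomial, ← smul_eq_C_mul, Tfun_smul1]
    rw [show (Tfun J (X ^ n) c d) = 0 from ?_, smul_zero]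
    induction c using Polynomial.induction_on' with
    | add u v hu hv => rw [Tfun_add2, hu, hv, add_zero]
    | monomial m b' =>
      rw [← C_mul_X_pow_eq_monomial, ← smul_eq_C_mul, Tfun_smul2]
      rw [show (Tfun J (X ^ n) (X ^ m) d) = 0 from ?_, smul_zero]
      induction d using Polynomial.induction_on' with
      | add u v hu hv => rw [Tfun_add3, hu, hv, add_zero]
      | monomial k c' =>
        rw [← C_mul_X_pow_eq_monomial, ← smul_eq_C_mul, Tfun_smul3,
          Tfun_pow J hJ, smul_zero]

end Aux

/-- For the integration operator `J` on `K[x]` (char `K` = 0), the product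
`a ⋆ b = a * J² b` satisfies `(a, b, [c, d]) + (a, c, [d, b]) + (a, d, [b, c]) = 0`. -/
theorem stmt_18 (K : Type*) [Field K] [CharZero K]
    (J : Polynomial K →ₗ[K] Polynomial K)
    (hJ : ∀ m : ℕ, J (X ^ m) = (((m : K) + 1)⁻¹) • X ^ (m + 1)) :
    ∀ a b c d : Polynomial K,
      sassoc J a b (sbrk J c d) + sassoc J a c (sbrk J d b)
        + sassoc J a d (sbrk J b c) = 0 := by
  intro a b c d
  rw [sassoc_eq, sassoc_eq, sassoc_eq, ← mul_add, ← mul_add, ← Tfun,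
    Tfun_eq_zero J hJ, mul_zero]
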